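/- (Chen's identity for the tropical non-strict signature) Let z = (z_1, z_2, …) be a sequence of real numbers, 0 ≤ p ≤ r ≤ q integers, and w a word with letters in ℤ \ {0}. Then ⟨ISS^{(idem)}_{p,q}(z), w⟩ = min_{uv = w} ( ⟨ISS^{(idem)}_{p,r}(z), u⟩ + ⟨ISS^{(idem)}_{r,q}(z), v⟩ ), the minimum over all len(w)+1 ways of writing w as a concatenation w = uv of two (possibly empty) words (with the convention (+∞) + x = +∞). -/

import Mathlib

/-- The tropical (min-plus) **non-strict** iterated-sums signature coefficient
`⟨ISS^(idem)_{s,t}(z), w⟩ = min_{s < j_1 ≤ ⋯ ≤ j_k ≤ t} (w_1 z_{j_1} + ⋯ + w_k z_{j_k})`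
of a real sequence `z`, for a word `w` with integer letters; it takes values in
`ℝ ∪ {+∞}` (with `(+∞) + x = +∞`), is `0` on the empty word, and `+∞` when the index
set is empty. -/
noncomputable def tropISS (z : ℕ → ℝ) : ℕ → ℕ → List ℤ → WithTop ℝ
  | _, _, [] => 0
  | s, t, a :: w =>
      (Finset.Ioc s t).inf fun j => (((a : ℝ) * z j : ℝ) : WithTop ℝ) + tropISS z (j - 1) t w


lemma myInfAdd {ι : Type*} [DecidableEq ι] (s : Finset ι) (f : ι → WithTop ℝ) (c : WithTop ℝ) :
    s.inf f + c = s.inf fun i => f i + c := by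
  induction s using Finset.induction with
  | empty => simp [top_add]
  | insert _ _ _ ih =>
      simp only [Finset.inf_insert, ← ih]
      exact (min_add_add_right (α := WithTop ℝ) _ _ _).symm

lemma myRangePeel {α : Type*} [SemilatticeInf α] [OrderTop α] (n : ℕ) (f : ℕ → α) :
    (Finset.range (n+1)).inf f = f 0 ⊓ (Finset.range n).inf (fun i => f (i+1)) := by
  induction n with
  | zero => simp
  | succ n ih =>
      rw [Finset.range_add_one, Finset.inf_insert, ih, Finset.range_add_one, Finset.inf_insert]
      rw [inf_left_comm]

lemma myAddInf {ι : Type*} [DecidableEq ι] (s : Finset ι) (f : ι → WithTop ℝ) (c : WithTop ℝ) :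
    c + s.inf f = s.inf fun i => c + f i := by
  rw [add_comm, myInfAdd]; simp_rw [add_comm]

/-- **Chen's identity for the tropical non-strict signature.** For a real sequence `z`,
integers `0 ≤ p ≤ r ≤ q`, and a word `w` with letters in `ℤ \ {0}`:
`⟨ISS^(idem)_{p,q}(z), w⟩ = min_{uv = w} (⟨ISS^(idem)_{p,r}(z), u⟩ + ⟨ISS^(idem)_{r,q}(z), v⟩)`,
the minimum over all `len(w) + 1` decompositions `w = uv`. -/
theorem trop_issi_chen (z : ℕ → ℝ) (p r q : ℕ) (hpr : p ≤ r) (hrq : r ≤ q)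
    (w : List ℤ) (hw : ∀ a ∈ w, a ≠ 0) :
    tropISS z p q w =
      (Finset.range (w.length + 1)).inf fun i =>
        tropISS z p r (w.take i) + tropISS z r q (w.drop i) := by
  
  clear hw
  induction w generalizing p with
  | nil => simp [tropISS]
  | cons a w ih =>
    have h1 : (Finset.Ioc p r).inf
          (fun j => (((a : ℝ) * z j : ℝ) : WithTop ℝ) + tropISS z (j - 1) q w)
        = (Finset.range (w.length + 1)).inf fun i =>
            tropISS z p r (a :: w.take i) + tropISS z r q (w.drop i) := by
      have step1 : (Finset.Ioc p r).inf
            (fun j => (((a : ℝ) * z j : ℝ) : WithTop ℝ) + tropISS z (j - 1) q w)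
          = (Finset.Ioc p r).inf fun j => (Finset.range (w.length + 1)).inf fun i =>
              (((a : ℝ) * z j : ℝ) : WithTop ℝ) +
                (tropISS z (j - 1) r (w.take i) + tropISS z r q (w.drop i)) := by
        refine Finset.inf_congr rfl fun j hj => ?_
        rw [ih (j - 1) (le_trans (Nat.sub_le j 1) (Finset.mem_Ioc.mp hj).2), myAddInf]
      rw [step1, Finset.inf_comm]
      refine Finset.inf_congr rfl fun i hi => ?_
      simp_rw [← add_assoc]
      rw [← myInfAdd]
      rfl
    have hlen : (a :: w).length + 1 = (w.length + 1) + 1 := by simp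
    rw [hlen, myRangePeel]
    simp only [List.take_succ_cons, List.drop_succ_cons, List.take_zero, List.drop_zero]
    rw [← h1]
    have h0 : tropISS z p r ([] : List ℤ) + tropISS z r q (a :: w)
        = (Finset.Ioc r q).inf
            (fun j => (((a : ℝ) * z j : ℝ) : WithTop ℝ) + tropISS z (j - 1) q w) := by
      simp [tropISS]
    rw [h0]
    show tropISS z p q (a :: w) = _
    rw [tropISS, ← Finset.Ioc_union_Ioc_eq_Ioc hpr hrq, Finset.inf_union, inf_comm]
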